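/- In a finite-type nonatomic aggregative game with type partition (Θ_i)_{i∈I} of [0,1] with measures μ_i, a symmetric feasible profile x̂ (constant on each Θ_i, with value x̂_i ∈ X_i, aggregate in A) is a variational Wardrop equilibrium if and only if it solves the finite-dimensional variational inequality: Σ_{i∈I} ⟨∇₁f_i(x̂_i, Σ_j μ_j x̂_j), μ_i x_i − μ_i x̂_i⟩ ≥ 0 for all symmetric feasible profiles (x_i)_{i∈I} with x_i ∈ X_i and Σ_i μ_i x_i ∈ A. -/

import Mathlib

open Metric MeasureTheory
open scoped RealInnerProductSpace

/-- Lebesgue measure restricted to the player set `Θ = [0,1]`. -/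
noncomputable def μ01 : Measure ℝ := volume.restrict (Set.Icc 0 1)

section Aux

variable {I : ℕ} {Θp : Fin I → Set ℝ}

/-- decomposition of the integral over `[0,1]` into the pieces of the partition. -/
lemma decomp_integral {F : Type*} [NormedAddCommGroup F] [NormedSpace ℝ F]
    (hΘmeas : ∀ i, MeasurableSet (Θp i))
    (hΘdisj : ∀ i j, i ≠ j → Disjoint (Θp i) (Θp j))
    (hΘcover : (⋃ i, Θp i) = Set.Icc (0:ℝ) 1)
    (f : ℝ → F) (hf : Integrable f μ01) :
    ∫ θ, f θ ∂μ01 = ∑ i, ∫ θ in Θp i, f θ := by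
  have h1 : μ01 = volume.restrict (⋃ i, Θp i) := by rw [hΘcover]; rfl
  rw [h1] at hf ⊢
  rw [MeasureTheory.integral_iUnion hΘmeas (fun i j hij => hΘdisj i j hij) hf]
  exact tsum_fintype _

end Aux

/-- Proposition `prop:SVWEfiniteChar`: in a finite-type nonatomic aggregative
game with aggregative constraint, a symmetric feasible profile (constant equal to `v i` on
each `Θ_i`) is a variational Wardrop equilibrium iff it solves the finite-dimensional
variational inequality `Σ_i ⟨∇₁f_i(v_i, Σ_j μ_j v_j), μ_i w_i - μ_i v_i⟩ ≥ 0` over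
symmetric feasible profiles. -/
theorem SVWE_iff_finite_VI {T I : ℕ}
    (Θp : Fin I → Set ℝ) (ι : ℝ → Fin I)
    (Xi : Fin I → Set (EuclideanSpace ℝ (Fin T)))
    (A : Set (EuclideanSpace ℝ (Fin T)))
    (gi : Fin I → EuclideanSpace ℝ (Fin T) → EuclideanSpace ℝ (Fin T) →
      EuclideanSpace ℝ (Fin T))
    (hΘmeas : ∀ i, MeasurableSet (Θp i))
    (hΘdisj : ∀ i j, i ≠ j → Disjoint (Θp i) (Θp j))
    (hΘcover : (⋃ i, Θp i) = Set.Icc (0:ℝ) 1)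
    (hι : ∀ i, ∀ θ ∈ Θp i, ι θ = i) (hιmeas : Measurable ι)
    (hXine : ∀ i, (Xi i).Nonempty) (hXiconv : ∀ i, Convex ℝ (Xi i))
    (hXicomp : ∀ i, IsCompact (Xi i))
    (hAconv : Convex ℝ A) (hAcomp : IsCompact A)
    (hgicont : ∀ i, Continuous fun p : EuclideanSpace ℝ (Fin T) × EuclideanSpace ℝ (Fin T)
      => gi i p.1 p.2)
    (v : Fin I → EuclideanSpace ℝ (Fin T))
    (hv : ∀ i, v i ∈ Xi i)
    (hvA : (∑ i, (volume (Θp i)).toReal • v i) ∈ A) :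
    -- the symmetric profile `θ ↦ v (ι θ)` is a VWE ...
    (∀ z : ℝ → EuclideanSpace ℝ (Fin T), Measurable z →
        (∀ i, ∀ θ ∈ Θp i, z θ ∈ Xi i) → (∫ θ, z θ ∂μ01) ∈ A →
        0 ≤ ∫ θ, ⟪gi (ι θ) (v (ι θ)) (∫ t, v (ι t) ∂μ01), z θ - v (ι θ)⟫ ∂μ01)
    ↔
    -- ... iff it solves the finite-dimensional variational inequality
    (∀ w : Fin I → EuclideanSpace ℝ (Fin T), (∀ i, w i ∈ Xi i) →
        (∑ i, (volume (Θp i)).toReal • w i) ∈ A →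
        0 ≤ ∑ i, ⟪gi i (v i) (∑ j, (volume (Θp j)).toReal • v j),
                  (volume (Θp i)).toReal • w i - (volume (Θp i)).toReal • v i⟫) := by
  classical
  -- basic facts about the partition
  have hsub : ∀ i, Θp i ⊆ Set.Icc (0:ℝ) 1 := fun i => by
    rw [← hΘcover]; exact Set.subset_iUnion Θp i
  have hfinΘ : ∀ i, volume (Θp i) ≠ ⊤ := fun i =>
    ne_top_of_le_ne_top (by simp [Real.volume_Icc]) (measure_mono (hsub i))
  have hres : ∀ i, μ01.restrict (Θp i) = volume.restrict (Θp i) := fun i => by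
    rw [μ01, Measure.restrict_restrict (hΘmeas i),
      Set.inter_eq_self_of_subset_left (hsub i)]
  haveI : IsFiniteMeasure μ01 := by
    constructor
    rw [μ01, Measure.restrict_apply MeasurableSet.univ, Set.univ_inter, Real.volume_Icc]
    simp
  -- bounds
  have hCex : ∀ i, ∃ C : ℝ, ∀ x ∈ Xi i, ‖x‖ ≤ C := fun i =>
    isBounded_iff_forall_norm_le.mp (hXicomp i).isBounded
  choose C hC using hCex
  set Mz : ℝ := ∑ j, max (C j) 0 with hMz
  have hCMz : ∀ i, C i ≤ Mz := fun i =>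
    le_trans (le_max_left _ _)
      (Finset.single_le_sum (fun j _ => le_max_right (C j) 0) (Finset.mem_univ i))
  -- membership a.e.
  have haem : ∀ᵐ θ ∂μ01, ∃ i, θ ∈ Θp i := by
    have h : ∀ᵐ θ ∂μ01, θ ∈ Set.Icc (0:ℝ) 1 :=
      ae_restrict_mem (μ := volume) measurableSet_Icc
    filter_upwards [h] with θ hθ
    rw [← hΘcover] at hθ; exact Set.mem_iUnion.mp hθ
  -- integrability of feasible profiles
  have hint : ∀ z : ℝ → EuclideanSpace ℝ (Fin T), Measurable z → (∀ i, ∀ θ ∈ Θp i, z θ ∈ Xi i) →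
      Integrable z μ01 := by
    intro z hzm hzx
    refine ⟨hzm.aestronglyMeasurable, HasFiniteIntegral.of_bounded (C := Mz) ?_⟩
    filter_upwards [haem] with θ hθ
    obtain ⟨i, hi⟩ := hθ
    exact le_trans (hC i _ (hzx i θ hi)) (hCMz i)
  -- the aggregate of the symmetric profile
  have hvmeas : Measurable (fun θ => v (ι θ)) := (Measurable.of_discrete (f := v)).comp hιmeas
  have hvx : ∀ i, ∀ θ ∈ Θp i, v (ι θ) ∈ Xi i := fun i θ hθ => by
    rw [hι i θ hθ]; exact hv i
  have hvint : Integrable (fun θ => v (ι θ)) μ01 := hint _ hvmeas hvx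
  -- set integral of a piecewise-constant function
  have hpiece : ∀ (F : Fin I → EuclideanSpace ℝ (Fin T)) (i : Fin I),
      ∫ θ in Θp i, F (ι θ) = (volume (Θp i)).toReal • F i := by
    intro F i
    rw [setIntegral_congr_fun (hΘmeas i) (fun θ hθ => by rw [hι i θ hθ]),
      setIntegral_const]
    rfl
  have hagg : (∫ t, v (ι t) ∂μ01) = ∑ j, (volume (Θp j)).toReal • v j := by
    rw [decomp_integral hΘmeas hΘdisj hΘcover _ hvint]
    exact Finset.sum_congr rfl fun i _ => hpiece v i
  set S : EuclideanSpace ℝ (Fin T) := ∑ j, (volume (Θp j)).toReal • v j with hS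
  set G : Fin I → EuclideanSpace ℝ (Fin T) := fun i => gi i (v i) S with hG
  -- integrability of the inner-product integrand
  set MG : ℝ := ∑ j, ‖G j‖ with hMG
  have hGM : ∀ i, ‖G i‖ ≤ MG := fun i =>
    Finset.single_le_sum (fun j _ => norm_nonneg (G j)) (Finset.mem_univ i)
  have hinner_int : ∀ z : ℝ → EuclideanSpace ℝ (Fin T), Measurable z → (∀ i, ∀ θ ∈ Θp i, z θ ∈ Xi i) →
      Integrable (fun θ => ⟪G (ι θ), z θ - v (ι θ)⟫) μ01 := by
    intro z hzm hzx
    have hm : Measurable (fun θ => ⟪G (ι θ), z θ - v (ι θ)⟫) :=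
      ((Measurable.of_discrete (f := G)).comp hιmeas).inner (hzm.sub hvmeas)
    refine ⟨hm.aestronglyMeasurable,
      HasFiniteIntegral.of_bounded (C := MG * (Mz + Mz)) ?_⟩
    filter_upwards [haem] with θ hθ
    obtain ⟨i, hi⟩ := hθ
    have h1 : ‖z θ - v (ι θ)‖ ≤ Mz + Mz := by
      refine le_trans (norm_sub_le _ _) (add_le_add ?_ ?_)
      · exact le_trans (hC i _ (hzx i θ hi)) (hCMz i)
      · exact le_trans (hC i _ (hvx i θ hi)) (hCMz i)
    calc ‖⟪G (ι θ), z θ - v (ι θ)⟫‖ ≤ ‖G (ι θ)‖ * ‖z θ - v (ι θ)‖ :=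
          norm_inner_le_norm _ _
      _ ≤ MG * (Mz + Mz) :=
          mul_le_mul (hGM (ι θ)) h1 (norm_nonneg _)
            (le_trans (norm_nonneg (G (ι θ))) (hGM (ι θ)))
  -- the key computation: the VWE integral equals the finite sum
  have hkey : ∀ z : ℝ → EuclideanSpace ℝ (Fin T), Measurable z → (∀ i, ∀ θ ∈ Θp i, z θ ∈ Xi i) →
      ∫ θ, ⟪G (ι θ), z θ - v (ι θ)⟫ ∂μ01
        = ∑ i, ⟪G i, (∫ θ in Θp i, z θ) - (volume (Θp i)).toReal • v i⟫ := by
    intro z hzm hzx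
    rw [decomp_integral hΘmeas hΘdisj hΘcover _ (hinner_int z hzm hzx)]
    refine Finset.sum_congr rfl fun i _ => ?_
    have hzi : Integrable z (volume.restrict (Θp i)) := by
      rw [← hres i]; exact (hint z hzm hzx).restrict
    have hfin : IsFiniteMeasure (volume.restrict (Θp i)) := by
      constructor
      rw [Measure.restrict_apply MeasurableSet.univ, Set.univ_inter]
      exact (hfinΘ i).lt_top
    have hconst : Integrable (fun _ : ℝ => v i) (volume.restrict (Θp i)) :=
      integrable_const _
    calc ∫ θ in Θp i, ⟪G (ι θ), z θ - v (ι θ)⟫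
        = ∫ θ in Θp i, ⟪G i, z θ - v i⟫ :=
          setIntegral_congr_fun (hΘmeas i) (fun θ hθ => by rw [hι i θ hθ])
      _ = ⟪G i, ∫ θ in Θp i, (z θ - v i)⟫ := integral_inner (hzi.sub hconst) (G i)
      _ = ⟪G i, (∫ θ in Θp i, z θ) - (volume (Θp i)).toReal • v i⟫ := by
          rw [integral_sub hzi hconst, setIntegral_const]
          rfl
  constructor
  · -- VWE → finite VI
    intro hVWE w hw hwA
    have hzm : Measurable (fun θ => w (ι θ)) := (Measurable.of_discrete (f := w)).comp hιmeas
    have hzx : ∀ i, ∀ θ ∈ Θp i, w (ι θ) ∈ Xi i := fun i θ hθ => by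
      rw [hι i θ hθ]; exact hw i
    have hzA : (∫ θ, w (ι θ) ∂μ01) ∈ A := by
      rw [decomp_integral hΘmeas hΘdisj hΘcover _ (hint _ hzm hzx)]
      rw [show ∑ i, ∫ θ in Θp i, w (ι θ) = ∑ i, (volume (Θp i)).toReal • w i from
        Finset.sum_congr rfl fun i _ => hpiece w i]
      exact hwA
    have h := hVWE (fun θ => w (ι θ)) hzm hzx hzA
    rw [hagg] at h
    rw [hkey (fun θ => w (ι θ)) hzm hzx] at h
    convert h using 2 with i
    rw [hpiece w i]
  · -- finite VI → VWE
    intro hVI z hzm hzx hzA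
    set w : Fin I → EuclideanSpace ℝ (Fin T) := fun i =>
      if h : volume (Θp i) = 0 then v i
      else ((volume (Θp i)).toReal)⁻¹ • ∫ θ in Θp i, z θ with hwdef
    have hzi : ∀ i, IntegrableOn z (Θp i) volume := by
      intro i
      rw [IntegrableOn, ← hres i]; exact (hint z hzm hzx).restrict
    have hmuw : ∀ i, (volume (Θp i)).toReal • w i = ∫ θ in Θp i, z θ := by
      intro i
      by_cases h : volume (Θp i) = 0
      · simp only [hwdef, h, dif_pos]
        rw [show (volume.restrict (Θp i)) = 0 from Measure.restrict_eq_zero.mpr h]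
        simp [h]
      · simp only [hwdef, h, dif_neg, not_false_iff]
        rw [smul_inv_smul₀ (by
          simp only [ne_eq, ENNReal.toReal_eq_zero_iff]
          push_neg
          exact ⟨h, hfinΘ i⟩)]
    have hwX : ∀ i, w i ∈ Xi i := by
      intro i
      by_cases h : volume (Θp i) = 0
      · simp only [hwdef, h, dif_pos]; exact hv i
      · simp only [hwdef, h, dif_neg, not_false_iff]
        have hmem := (hXiconv i).set_average_mem (hXicomp i).isClosed h (hfinΘ i)
          (f := z) ?_ (hzi i)
        · rwa [setAverage_eq] at hmem
        · filter_upwards [ae_restrict_mem (hΘmeas i)] with θ hθ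
          exact hzx i θ hθ
    have hwA : (∑ i, (volume (Θp i)).toReal • w i) ∈ A := by
      rw [show ∑ i, (volume (Θp i)).toReal • w i = ∑ i, ∫ θ in Θp i, z θ from
        Finset.sum_congr rfl fun i _ => hmuw i]
      rw [← decomp_integral hΘmeas hΘdisj hΘcover _ (hint z hzm hzx)]
      exact hzA
    have h := hVI w hwX hwA
    rw [hagg, hkey z hzm hzx]
    convert h using 2 with i
    rw [hmuw i]
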